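/- Let 4 < q < p, A > 0, B ≥ 0, C > 0, D > 0, and define φ(t) = (A/2)t² + (B/4)t⁴ − (C/q)t^q − (D/p)t^p for t ≥ 0. Then there exists a unique t₀ > 0 such that φ is strictly increasing on (0, t₀] and strictly decreasing on [t₀, ∞); t₀ is the unique critical point of φ in (0,∞); and φ(t₀) = max_{t ≥ 0} φ(t) > 0. -/

import Mathlib

open Set

/-- The fibering map `φ(t) = (A/2)t² + (B/4)t⁴ - (C/q)t^q - (D/p)t^p` for `4 < q < p`. -/
noncomputable def phiHigh (q p A B C D t : ℝ) : ℝ :=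
  A / 2 * t ^ (2 : ℝ) + B / 4 * t ^ (4 : ℝ) - C / q * t ^ q - D / p * t ^ p

noncomputable def gHigh (q p A B C D t : ℝ) : ℝ :=
  A * t ^ (-2 : ℝ) + B - C * t ^ (q - 4) - D * t ^ (p - 4)

lemma phiHigh_hasDerivAt (q p A B C D : ℝ) (hq0 : q ≠ 0) (hp0 : p ≠ 0) {t : ℝ} (ht : 0 < t) :
    HasDerivAt (phiHigh q p A B C D) (t ^ (3 : ℝ) * gHigh q p A B C D t) t := by
  have h2 : HasDerivAt (fun x : ℝ => x ^ (2:ℝ)) (2 * t ^ ((2:ℝ) - 1)) t :=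
    Real.hasDerivAt_rpow_const (Or.inl ht.ne')
  have h4 : HasDerivAt (fun x : ℝ => x ^ (4:ℝ)) (4 * t ^ ((4:ℝ) - 1)) t :=
    Real.hasDerivAt_rpow_const (Or.inl ht.ne')
  have hqd : HasDerivAt (fun x : ℝ => x ^ q) (q * t ^ (q - 1)) t :=
    Real.hasDerivAt_rpow_const (Or.inl ht.ne')
  have hpd : HasDerivAt (fun x : ℝ => x ^ p) (p * t ^ (p - 1)) t :=
    Real.hasDerivAt_rpow_const (Or.inl ht.ne')
  have H := (((h2.const_mul (A/2)).add (h4.const_mul (B/4))).sub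
      (hqd.const_mul (C/q))).sub (hpd.const_mul (D/p))
  have e1 : t ^ (3:ℝ) * t ^ (-2:ℝ) = t := by
    rw [← Real.rpow_add ht]; norm_num
  have e2 : t ^ (3:ℝ) * t ^ (q - 4) = t ^ (q - 1) := by
    rw [← Real.rpow_add ht]; ring_nf
  have e3 : t ^ (3:ℝ) * t ^ (p - 4) = t ^ (p - 1) := by
    rw [← Real.rpow_add ht]; ring_nf
  have e4 : t ^ ((2:ℝ) - 1) = t := by norm_num
  have e5 : t ^ ((4:ℝ) - 1) = t ^ (3:ℝ) := by norm_num
  refine H.congr_deriv (Eq.symm ?_)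
  rw [e4, e5]
  unfold gHigh
  field_simp
  linear_combination A * e1 - C * e2 - D * e3

lemma gHigh_strictAntiOn (q p A B C D : ℝ) (hq : 4 < q) (hqp : q < p)
    (hA : 0 < A) (hC : 0 < C) (hD : 0 < D) :
    StrictAntiOn (gHigh q p A B C D) (Ioi 0) := by
  intro x hx y hy hxy
  simp only [mem_Ioi] at hx hy
  have h1 : y ^ (-2:ℝ) < x ^ (-2:ℝ) := by
    rw [Real.rpow_neg hx.le, Real.rpow_neg hy.le]
    exact inv_strictAnti₀ (Real.rpow_pos_of_pos hx 2) (Real.rpow_lt_rpow hx.le hxy two_pos)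
  have h2 : x ^ (q - 4) < y ^ (q - 4) := Real.rpow_lt_rpow hx.le hxy (by linarith)
  have h3 : x ^ (p - 4) < y ^ (p - 4) := Real.rpow_lt_rpow hx.le hxy (by linarith)
  have := mul_lt_mul_of_pos_left h1 hA
  have := mul_lt_mul_of_pos_left h2 hC
  have := mul_lt_mul_of_pos_left h3 hD
  unfold gHigh; linarith

lemma phiHigh_continuous (q p A B C D : ℝ) (hq : 0 < q) (hp : 0 < p) :
    Continuous (phiHigh q p A B C D) := by
  have h : ∀ e : ℝ, 0 ≤ e → Continuous (fun x : ℝ => x ^ e) := fun e he =>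
    continuous_iff_continuousAt.mpr fun x => Real.continuousAt_rpow_const x e (Or.inr he)
  exact (((continuous_const.mul (h 2 (by norm_num))).add
    (continuous_const.mul (h 4 (by norm_num)))).sub
    (continuous_const.mul (h q hq.le))).sub (continuous_const.mul (h p hp.le))


lemma gHigh_exists_root (q p A B C D : ℝ) (hq : 4 < q) (hqp : q < p)
    (hA : 0 < A) (hB : 0 ≤ B) (hC : 0 < C) (hD : 0 < D) :
    ∃ t₀ : ℝ, 0 < t₀ ∧ gHigh q p A B C D t₀ = 0 := by
  set a : ℝ := min 1 (Real.sqrt (A / (C + D + 1))) with ha_def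
  set b : ℝ := max 1 (((A + B + 1) / D) ^ ((p - 4)⁻¹)) with hb_def
  have hv : (0:ℝ) < A / (C + D + 1) := div_pos hA (by linarith)
  have ha0 : 0 < a := lt_min one_pos (Real.sqrt_pos.mpr hv)
  have ha1 : a ≤ 1 := min_le_left _ _
  have hb1 : (1:ℝ) ≤ b := le_max_left _ _
  have hab : a ≤ b := ha1.trans hb1
  have hb0 : 0 < b := lt_of_lt_of_le one_pos hb1
  -- g a > 0
  have hga : 0 < gHigh q p A B C D a := by
    have h1 : a ≤ Real.sqrt (A / (C + D + 1)) := min_le_right _ _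
    have hsq : a ^ (2:ℝ) ≤ A / (C + D + 1) := by
      have h2 : a ^ (2:ℝ) = a * a := by
        rw [show (2:ℝ) = ((2:ℕ):ℝ) by norm_num, Real.rpow_natCast]; ring
      rw [h2]
      nlinarith [Real.mul_self_sqrt hv.le, Real.sqrt_nonneg (A / (C + D + 1))]
    have hpos2 : 0 < a ^ (2:ℝ) := Real.rpow_pos_of_pos ha0 2
    have h5 : (A / (C + D + 1))⁻¹ ≤ (a ^ (2:ℝ))⁻¹ := inv_anti₀ hpos2 hsq
    have h6 : A * (A / (C + D + 1))⁻¹ ≤ A * (a ^ (2:ℝ))⁻¹ :=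
      mul_le_mul_of_nonneg_left h5 hA.le
    have h7 : A * (A / (C + D + 1))⁻¹ = C + D + 1 := by field_simp
    have hq4 : a ^ (q - 4) ≤ 1 := Real.rpow_le_one ha0.le ha1 (by linarith)
    have hp4 : a ^ (p - 4) ≤ 1 := Real.rpow_le_one ha0.le ha1 (by linarith)
    have h8 := mul_le_mul_of_nonneg_left hq4 hC.le
    have h9 := mul_le_mul_of_nonneg_left hp4 hD.le
    unfold gHigh
    rw [Real.rpow_neg ha0.le]
    linarith
  -- g b < 0
  have hgb : gHigh q p A B C D b < 0 := by
    have hbneg : b ^ (-2:ℝ) ≤ 1 := Real.rpow_le_one_of_one_le_of_nonpos hb1 (by norm_num)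
    have hbq : 0 ≤ b ^ (q - 4) := Real.rpow_nonneg hb0.le _
    have hv2 : (0:ℝ) ≤ (A + B + 1) / D := by positivity
    have hbp : (A + B + 1) / D ≤ b ^ (p - 4) := by
      have hr : ((A + B + 1) / D) ^ ((p - 4)⁻¹) ≤ b := le_max_right _ _
      calc (A + B + 1) / D = (((A + B + 1) / D) ^ ((p - 4)⁻¹)) ^ (p - 4) :=
            (Real.rpow_inv_rpow hv2 (by linarith : p - 4 ≠ 0)).symm
        _ ≤ b ^ (p - 4) := Real.rpow_le_rpow (Real.rpow_nonneg hv2 _) hr (by linarith)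
    have h10 := mul_le_mul_of_nonneg_left hbp hD.le
    have h11 : D * ((A + B + 1) / D) = A + B + 1 := by field_simp
    have h12 := mul_le_mul_of_nonneg_left hbneg hA.le
    have h13 := mul_le_mul_of_nonneg_left hbq hC.le
    unfold gHigh
    linarith
  -- continuity of g on Icc a b
  have hcont : ContinuousOn (gHigh q p A B C D) (Icc a b) := by
    intro x hx
    have hx0 : x ≠ 0 := (lt_of_lt_of_le ha0 hx.1).ne'
    have h : ∀ e : ℝ, ContinuousAt (fun y : ℝ => y ^ e) x := fun e =>
      Real.continuousAt_rpow_const x e (Or.inl hx0)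
    have hca : ContinuousAt (fun y : ℝ => A * y ^ (-2:ℝ) + B - C * y ^ (q - 4) - D * y ^ (p - 4)) x :=
      ((((h (-2)).const_mul A).add continuousAt_const).sub
        ((h (q - 4)).const_mul C)).sub ((h (p - 4)).const_mul D)
    exact hca.continuousWithinAt
  have hmem : (0:ℝ) ∈ Icc (gHigh q p A B C D b) (gHigh q p A B C D a) := ⟨hgb.le, hga.le⟩
  obtain ⟨t₀, ht₀, hgt₀⟩ := intermediate_value_Icc' hab hcont hmem
  exact ⟨t₀, lt_of_lt_of_le ha0 ht₀.1, hgt₀⟩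

/-- Lemma 5.2 of the paper (model form): for `4 < q < p`, `A > 0`, `B ≥ 0`, `C > 0`, `D > 0`,
there is a unique `t₀ > 0` such that `φ` is strictly increasing on `(0, t₀]`, strictly
decreasing on `[t₀, ∞)`, `t₀` is the unique critical point of `φ` in `(0, ∞)`, and
`φ(t₀) = max_{t ≥ 0} φ(t) > 0`. -/
theorem phiHigh_shape (q p A B C D : ℝ) (hq : 4 < q) (hqp : q < p)
    (hA : 0 < A) (hB : 0 ≤ B) (hC : 0 < C) (hD : 0 < D) :
    ∃! t₀ : ℝ, 0 < t₀ ∧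
      StrictMonoOn (phiHigh q p A B C D) (Ioc 0 t₀) ∧
      StrictAntiOn (phiHigh q p A B C D) (Ici t₀) ∧
      deriv (phiHigh q p A B C D) t₀ = 0 ∧
      (∀ t, 0 < t → deriv (phiHigh q p A B C D) t = 0 → t = t₀) ∧
      (∀ t, 0 ≤ t → phiHigh q p A B C D t ≤ phiHigh q p A B C D t₀) ∧
      0 < phiHigh q p A B C D t₀ := by
  have hq0 : q ≠ 0 := by linarith
  have hp0 : p ≠ 0 := by linarith
  obtain ⟨t₀, ht₀, hgt₀⟩ := gHigh_exists_root q p A B C D hq hqp hA hB hC hD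
  have hanti := gHigh_strictAntiOn q p A B C D hq hqp hA hC hD
  have hcont := phiHigh_continuous q p A B C D (by linarith) (by linarith)
  have hderiv : ∀ x : ℝ, 0 < x →
      deriv (phiHigh q p A B C D) x = x ^ (3:ℝ) * gHigh q p A B C D x := fun x hx =>
    (phiHigh_hasDerivAt q p A B C D hq0 hp0 hx).deriv
  have hgpos : ∀ x : ℝ, 0 < x → x < t₀ → 0 < gHigh q p A B C D x := by
    intro x hx hlt
    have := hanti (mem_Ioi.mpr hx) (mem_Ioi.mpr ht₀) hlt
    rwa [hgt₀] at this
  have hgneg : ∀ x : ℝ, t₀ < x → gHigh q p A B C D x < 0 := by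
    intro x hlt
    have := hanti (mem_Ioi.mpr ht₀) (mem_Ioi.mpr (ht₀.trans hlt)) hlt
    rwa [hgt₀] at this
  -- strict mono on Icc 0 t₀
  have hmonoIcc : StrictMonoOn (phiHigh q p A B C D) (Icc 0 t₀) := by
    apply strictMonoOn_of_deriv_pos (convex_Icc 0 t₀) hcont.continuousOn
    intro x hx
    rw [interior_Icc] at hx
    rw [hderiv x hx.1]
    exact mul_pos (Real.rpow_pos_of_pos hx.1 3) (hgpos x hx.1 hx.2)
  have hantiIci : StrictAntiOn (phiHigh q p A B C D) (Ici t₀) := by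
    apply strictAntiOn_of_deriv_neg (convex_Ici t₀) hcont.continuousOn
    intro x hx
    rw [interior_Ici] at hx
    rw [hderiv x (ht₀.trans hx)]
    exact mul_neg_of_pos_of_neg (Real.rpow_pos_of_pos (ht₀.trans hx) 3) (hgneg x hx)
  have hd0 : deriv (phiHigh q p A B C D) t₀ = 0 := by
    rw [hderiv t₀ ht₀, hgt₀, mul_zero]
  have huniq : ∀ t, 0 < t → deriv (phiHigh q p A B C D) t = 0 → t = t₀ := by
    intro t ht hdt
    rw [hderiv t ht] at hdt
    have hg0 : gHigh q p A B C D t = 0 := by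
      rcases mul_eq_zero.mp hdt with h | h
      · exact absurd h (Real.rpow_pos_of_pos ht 3).ne'
      · exact h
    rcases lt_trichotomy t t₀ with h | h | h
    · exact absurd hg0 (hgpos t ht h).ne'
    · exact h
    · exact absurd hg0 (hgneg t h).ne
  have hphi0 : phiHigh q p A B C D 0 = 0 := by
    simp [phiHigh, Real.zero_rpow, hq0, hp0]
  have hmax : ∀ t, 0 ≤ t → phiHigh q p A B C D t ≤ phiHigh q p A B C D t₀ := by
    intro t ht
    rcases le_or_gt t t₀ with h | h
    · rcases eq_or_lt_of_le h with rfl | h'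
      · exact le_refl _
      · exact (hmonoIcc ⟨ht, h⟩ ⟨le_refl 0 |>.trans ht₀.le, le_refl t₀⟩ h').le
    · exact (hantiIci (self_mem_Ici) (mem_Ici.mpr h.le) h).le
  have hpos : 0 < phiHigh q p A B C D t₀ := by
    have := hmonoIcc ⟨le_refl 0, ht₀.le⟩ ⟨ht₀.le, le_refl t₀⟩ ht₀
    rwa [hphi0] at this
  refine ⟨t₀, ⟨ht₀, hmonoIcc.mono Ioc_subset_Icc_self, hantiIci, hd0, huniq, hmax, hpos⟩, ?_⟩
  rintro y ⟨hy0, -, -, -, hyuniq, -, -⟩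
  exact (hyuniq t₀ ht₀ hd0).symm
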